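/- arXiv:math/0701873 — 3 statements merged into one kernel-verified Lean document; each statement's English description precedes it below -/
import Mathlib

section
/- Let 0 < H₀ < 1, ω₁ > 0, and u, u' ≥ 0 with max(u,u')·ω₁ < 1. Then for every b > 0, |∫₀^{ω₁} sin(uξ) sin(u'ξ) sin(bξ) / ξ^{2H₀+2} dξ − u·u'·∫₀^{ω₁} sin(bξ)/ξ^{2H₀} dξ| ≤ (max(u,u'))⁴ · ω₁^{3−2H₀} / (1 − (max(u,u')·ω₁)²). -/
open MeasureTheory Real

lemma sin_prod_sub_bound {x y : ℝ} (hx0 : 0 ≤ x) (hx1 : x ≤ 1) (hy0 : 0 ≤ y) (hy1 : y ≤ 1) :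
    |Real.sin x * Real.sin y - x * y| ≤ (x ^ 3 * y + x * y ^ 3) / 4 := by
  have hsx : Real.sin x ≤ x := by
    rcases eq_or_lt_of_le hx0 with h | h
    · simp [← h]
    · exact (Real.sin_lt h).le
  have hsy : Real.sin y ≤ y := by
    rcases eq_or_lt_of_le hy0 with h | h
    · simp [← h]
    · exact (Real.sin_lt h).le
  have hsx' : x - x ^ 3 / 4 ≤ Real.sin x := by
    rcases eq_or_lt_of_le hx0 with h | h
    · simp [← h]
    · nlinarith [Real.sin_gt_sub_cube h, pow_nonneg hx0 3]
  have hsy' : y - y ^ 3 / 4 ≤ Real.sin y := by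
    rcases eq_or_lt_of_le hy0 with h | h
    · simp [← h]
    · nlinarith [Real.sin_gt_sub_cube h, pow_nonneg hy0 3]
  have hx3 : x ^ 3 ≤ x := by simpa using pow_le_pow_of_le_one hx0 hx1 (by norm_num : 1 ≤ 3)
  have hy3 : y ^ 3 ≤ y := by simpa using pow_le_pow_of_le_one hy0 hy1 (by norm_num : 1 ≤ 3)
  have hsx0 : 0 ≤ Real.sin x := by nlinarith
  have hsy0 : 0 ≤ Real.sin y := by nlinarith
  rw [abs_le]
  constructor
  · nlinarith [mul_le_mul hsx' hsy' (by nlinarith) (by nlinarith), pow_nonneg hx0 3,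
      pow_nonneg hy0 3, mul_nonneg (pow_nonneg hx0 3) (pow_nonneg hy0 3)]
  · nlinarith [mul_le_mul hsx hsy hsy0 hx0]

theorem low_frequency_sin_integral_bound (H₀ ω₁ u u' : ℝ)
    (hH0 : 0 < H₀) (hH1 : H₀ < 1) (hω : 0 < ω₁)
    (hu : 0 ≤ u) (hu' : 0 ≤ u') (hsmall : max u u' * ω₁ < 1) :
    ∀ b : ℝ, 0 < b →
      |(∫ ξ in (0:ℝ)..ω₁,
          Real.sin (u * ξ) * Real.sin (u' * ξ) * Real.sin (b * ξ) / ξ ^ (2 * H₀ + 2))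
        - u * u' * ∫ ξ in (0:ℝ)..ω₁, Real.sin (b * ξ) / ξ ^ (2 * H₀)|
      ≤ (max u u') ^ 4 * ω₁ ^ (3 - 2 * H₀) / (1 - (max u u' * ω₁) ^ 2) := by
  intro b hb
  set M := max u u' with hMdef
  have hM0 : 0 ≤ M := le_trans hu (le_max_left _ _)
  have huM : u ≤ M := le_max_left _ _
  have hu'M : u' ≤ M := le_max_right _ _
  -- measurability helpers
  have msin : ∀ c : ℝ, Measurable fun ξ : ℝ => Real.sin (c * ξ) := fun c =>
    (Real.continuous_sin.comp (continuous_const.mul continuous_id)).measurable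
  have mrpow : ∀ p : ℝ, 0 ≤ p → Measurable fun ξ : ℝ => ξ ^ p := fun p hp =>
    (Real.continuous_rpow_const hp).measurable
  -- useful facts on Ι 0 ω₁
  have hIoc : Set.uIoc (0:ℝ) ω₁ = Set.Ioc 0 ω₁ := Set.uIoc_of_le hω.le
  -- integrability of the dominating rpow function
  have hdom : IntervalIntegrable (fun ξ : ℝ => u * u' * b * ξ ^ (1 - 2 * H₀)) volume 0 ω₁ :=
    (intervalIntegral.intervalIntegrable_rpow' (by linarith)).const_mul _
  -- |sin t| ≤ |t|
  have habs_sin : ∀ t : ℝ, |Real.sin t| ≤ |t| := fun t => Real.abs_sin_le_abs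
  -- integrability of first integrand
  have hint1 : IntervalIntegrable
      (fun ξ : ℝ => Real.sin (u * ξ) * Real.sin (u' * ξ) * Real.sin (b * ξ) / ξ ^ (2 * H₀ + 2))
      volume 0 ω₁ := by
    apply hdom.mono_fun'
    · exact (((msin u).mul (msin u')).mul (msin b)).div
        (mrpow (2 * H₀ + 2) (by linarith)) |>.aestronglyMeasurable
    · filter_upwards [ae_restrict_mem measurableSet_uIoc] with ξ hξ
      rw [hIoc] at hξ
      obtain ⟨hξ0, hξω⟩ := hξ
      have hpow_pos : (0:ℝ) < ξ ^ (2 * H₀ + 2) := Real.rpow_pos_of_pos hξ0 _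
      have key : |Real.sin (u * ξ) * Real.sin (u' * ξ) * Real.sin (b * ξ)|
          ≤ u * u' * b * ξ ^ (3:ℕ) := by
        calc |Real.sin (u * ξ) * Real.sin (u' * ξ) * Real.sin (b * ξ)|
            = |Real.sin (u * ξ)| * |Real.sin (u' * ξ)| * |Real.sin (b * ξ)| := by
              rw [abs_mul, abs_mul]
          _ ≤ (u * ξ) * (u' * ξ) * (b * ξ) := by
              apply mul_le_mul (mul_le_mul ((habs_sin _).trans ?_) ((habs_sin _).trans ?_)
                (abs_nonneg _) (by positivity)) ((habs_sin _).trans ?_) (abs_nonneg _)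
                (by positivity)
              · rw [abs_of_nonneg (by positivity)]
              · rw [abs_of_nonneg (by positivity)]
              · rw [abs_of_nonneg (by positivity)]
          _ = u * u' * b * ξ ^ (3:ℕ) := by ring
      have hsplit : ξ ^ ((3:ℕ):ℝ) / ξ ^ (2 * H₀ + 2) = ξ ^ (1 - 2 * H₀) := by
        rw [← Real.rpow_sub hξ0]; norm_num; ring_nf
      simp only [Real.norm_eq_abs, abs_div, abs_of_pos hpow_pos]
      rw [div_le_iff₀ hpow_pos]
      calc |Real.sin (u * ξ) * Real.sin (u' * ξ) * Real.sin (b * ξ)|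
          ≤ u * u' * b * ξ ^ (3:ℕ) := key
        _ = u * u' * b * ξ ^ (1 - 2 * H₀) * ξ ^ (2 * H₀ + 2) := by
            rw [mul_assoc (u * u' * b), ← hsplit, div_mul_cancel₀, Real.rpow_natCast]
            exact hpow_pos.ne'
  -- integrability of second integrand
  have hint2 : IntervalIntegrable (fun ξ : ℝ => Real.sin (b * ξ) / ξ ^ (2 * H₀)) volume 0 ω₁ := by
    have : IntervalIntegrable (fun ξ : ℝ => b * ξ ^ (1 - 2 * H₀)) volume 0 ω₁ :=
      (intervalIntegral.intervalIntegrable_rpow' (by linarith)).const_mul _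
    apply this.mono_fun'
    · exact ((msin b).div (mrpow (2 * H₀) (by linarith))).aestronglyMeasurable
    · filter_upwards [ae_restrict_mem measurableSet_uIoc] with ξ hξ
      rw [hIoc] at hξ
      obtain ⟨hξ0, hξω⟩ := hξ
      have hpow_pos : (0:ℝ) < ξ ^ (2 * H₀) := Real.rpow_pos_of_pos hξ0 _
      simp only [Real.norm_eq_abs, abs_div, abs_of_pos hpow_pos]
      rw [div_le_iff₀ hpow_pos]
      calc |Real.sin (b * ξ)| ≤ b * ξ := by
            refine (habs_sin _).trans ?_
            rw [abs_of_nonneg (by positivity)]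
        _ = b * ξ ^ ((1:ℕ):ℝ) := by rw [Real.rpow_natCast]; norm_num
        _ = b * ξ ^ (1 - 2 * H₀) * ξ ^ (2 * H₀) := by
            rw [mul_assoc, ← Real.rpow_add hξ0]; norm_num
  -- rewrite the difference as a single integral
  rw [← intervalIntegral.integral_const_mul,
    ← intervalIntegral.integral_sub hint1 (hint2.const_mul _)]
  -- bounding function
  have hbound_int : IntervalIntegrable (fun ξ : ℝ => M ^ 4 / 2 * ξ ^ (2 - 2 * H₀)) volume 0 ω₁ :=
    (intervalIntegral.intervalIntegrable_rpow' (by linarith)).const_mul _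
  have key : |∫ ξ in (0:ℝ)..ω₁,
      (Real.sin (u * ξ) * Real.sin (u' * ξ) * Real.sin (b * ξ) / ξ ^ (2 * H₀ + 2)
        - u * u' * (Real.sin (b * ξ) / ξ ^ (2 * H₀)))|
      ≤ |∫ ξ in (0:ℝ)..ω₁, M ^ 4 / 2 * ξ ^ (2 - 2 * H₀)| := by
    rw [← Real.norm_eq_abs (∫ _ in _.._, _)]
    apply intervalIntegral.norm_integral_le_abs_of_norm_le _ hbound_int
    filter_upwards [ae_restrict_mem measurableSet_uIoc] with ξ hξ
    rw [hIoc] at hξ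
    obtain ⟨hξ0, hξω⟩ := hξ
    have hpow_pos : (0:ℝ) < ξ ^ (2 * H₀ + 2) := Real.rpow_pos_of_pos hξ0 _
    have hpow_pos' : (0:ℝ) < ξ ^ (2 * H₀) := Real.rpow_pos_of_pos hξ0 _
    have hx1 : u * ξ ≤ 1 := by
      calc u * ξ ≤ M * ω₁ := mul_le_mul huM hξω hξ0.le hM0
        _ ≤ 1 := hsmall.le
    have hy1 : u' * ξ ≤ 1 := by
      calc u' * ξ ≤ M * ω₁ := mul_le_mul hu'M hξω hξ0.le hM0
        _ ≤ 1 := hsmall.le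
    have hprod := sin_prod_sub_bound (by positivity) hx1 (by positivity) hy1
    -- rewrite the difference
    have hsq : ξ ^ (2 * H₀ + 2) = ξ ^ (2 * H₀) * ξ ^ (2:ℕ) := by
      rw [← Real.rpow_natCast ξ 2, ← Real.rpow_add hξ0]; norm_num
    have hrw : Real.sin (u * ξ) * Real.sin (u' * ξ) * Real.sin (b * ξ) / ξ ^ (2 * H₀ + 2)
        - u * u' * (Real.sin (b * ξ) / ξ ^ (2 * H₀))
        = (Real.sin (u * ξ) * Real.sin (u' * ξ) - (u * ξ) * (u' * ξ)) * Real.sin (b * ξ)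
          / ξ ^ (2 * H₀ + 2) := by
      rw [hsq]
      field_simp
    rw [Real.norm_eq_abs, hrw, abs_div, abs_of_pos hpow_pos, div_le_iff₀ hpow_pos, abs_mul]
    have hterm : |Real.sin (u * ξ) * Real.sin (u' * ξ) - u * ξ * (u' * ξ)|
        ≤ M ^ 4 / 2 * ξ ^ (4:ℕ) := by
      refine hprod.trans ?_
      have h1 : (u * ξ) ^ 3 * (u' * ξ) ≤ (M * ξ) ^ 3 * (M * ξ) :=
        mul_le_mul (pow_le_pow_left₀ (by positivity) (mul_le_mul_of_nonneg_right huM hξ0.le) 3)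
          (mul_le_mul_of_nonneg_right hu'M hξ0.le) (by positivity) (by positivity)
      have h2 : (u * ξ) * (u' * ξ) ^ 3 ≤ (M * ξ) * (M * ξ) ^ 3 :=
        mul_le_mul (mul_le_mul_of_nonneg_right huM hξ0.le)
          (pow_le_pow_left₀ (by positivity) (mul_le_mul_of_nonneg_right hu'M hξ0.le) 3)
          (by positivity) (by positivity)
      calc ((u * ξ) ^ 3 * (u' * ξ) + (u * ξ) * (u' * ξ) ^ 3) / 4
          ≤ ((M * ξ) ^ 3 * (M * ξ) + (M * ξ) * (M * ξ) ^ 3) / 4 := by linarith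
        _ = M ^ 4 / 2 * ξ ^ (4:ℕ) := by ring
    calc |Real.sin (u * ξ) * Real.sin (u' * ξ) - u * ξ * (u' * ξ)| * |Real.sin (b * ξ)|
        ≤ (M ^ 4 / 2 * ξ ^ (4:ℕ)) * 1 :=
          mul_le_mul hterm (Real.abs_sin_le_one _) (abs_nonneg _) (by positivity)
      _ = M ^ 4 / 2 * ξ ^ (2 - 2 * H₀) * ξ ^ (2 * H₀ + 2) := by
          have hmerge : ξ ^ (2 - 2 * H₀) * ξ ^ (2 * H₀ + 2) = ξ ^ (4:ℕ) := by
            rw [← Real.rpow_add hξ0,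
              show (2 - 2 * H₀ + (2 * H₀ + 2)) = ((4:ℕ):ℝ) by push_cast; ring,
              Real.rpow_natCast]
          rw [mul_one, mul_assoc, hmerge]
  refine key.trans ?_
  -- compute the integral of the bound
  rw [intervalIntegral.integral_const_mul, integral_rpow (Or.inl (by linarith))]
  rw [Real.zero_rpow (by linarith : (2 - 2 * H₀ + 1) ≠ 0), sub_zero]
  have he : 2 - 2 * H₀ + 1 = 3 - 2 * H₀ := by ring
  rw [he]
  have hWpos : 0 < ω₁ ^ (3 - 2 * H₀) := Real.rpow_pos_of_pos hω _
  set W := ω₁ ^ (3 - 2 * H₀) with hW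
  have hD : (1:ℝ) ≤ 3 - 2 * H₀ := by linarith
  have hq : M * ω₁ < 1 := hsmall
  have hq0 : 0 ≤ M * ω₁ := by positivity
  have hden : 0 < 1 - (M * ω₁) ^ 2 := by nlinarith
  have habs : |M ^ 4 / 2 * (W / (3 - 2 * H₀))| = M ^ 4 / 2 * (W / (3 - 2 * H₀)) :=
    abs_of_nonneg (mul_nonneg (by positivity) (div_nonneg hWpos.le (by linarith)))
  rw [habs]
  have step1 : M ^ 4 / 2 * (W / (3 - 2 * H₀)) ≤ M ^ 4 * W := by
    rw [div_mul_div_comm]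
    exact div_le_self (by positivity) (by linarith)
  refine step1.trans ?_
  rw [le_div_iff₀ hden]
  nlinarith [mul_nonneg (pow_nonneg hM0 4) hWpos.le, sq_nonneg (M * ω₁),
    mul_nonneg (mul_nonneg (pow_nonneg hM0 4) hWpos.le) (sq_nonneg (M * ω₁))]
end

section
/- Let 0 < H < 1, 0 < ω_i < ω_{i+1} < ∞, and u, u', b > 0. Then |∫_{ω_i}^{ω_{i+1}} sin(uξ) sin(u'ξ) cos(bξ) / ξ^{2H+1} dξ| ≤ C · u·u'/b, where C > 0 depends only on H, ω_i, ω_{i+1}. -/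
open MeasureTheory Real

theorem middle_band_integral_bound (H ωi ωip1 : ℝ)
    (hH0 : 0 < H) (hH1 : H < 1) (h0 : 0 < ωi) (hlt : ωi < ωip1) :
    ∃ C : ℝ, 0 < C ∧ ∀ u u' b : ℝ, 0 < u → 0 < u' → 0 < b →
      |∫ ξ in ωi..ωip1,
          Real.sin (u * ξ) * Real.sin (u' * ξ) * Real.cos (b * ξ) / ξ ^ (2 * H + 1)|
        ≤ C * (u * u') / b := by
  have hω1 : 0 < ωip1 := h0.trans hlt
  set q : ℝ := 2 * H + 1 with hq
  have hq0 : 0 < q := by rw [hq]; linarith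
  have hq1 : 0 ≤ q - 1 := by rw [hq]; linarith
  set K1 : ℝ := ωip1 * ωip1 / ωi ^ q with hK1
  set K2 : ℝ := (2 * (ωip1 * ωip1^q) + (ωip1 * ωip1) * ((2*H+1) * ωip1 ^ (q-1))) / (ωi ^ q) ^ 2
    with hK2
  have hK1pos : 0 < K1 := by rw [hK1]; positivity
  have hK2pos : 0 < K2 := by rw [hK2]; positivity
  refine ⟨2 * K1 + (ωip1 - ωi) * K2, ?_, ?_⟩
  · have := mul_pos (by linarith : (0:ℝ) < ωip1 - ωi) hK2pos
    linarith
  intro u u' b hu hu' hb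
  set F : ℝ → ℝ := fun ξ => Real.sin (u*ξ) * Real.sin (u'*ξ) / ξ ^ q with hF
  set F' : ℝ → ℝ := fun ξ =>
    ((u * Real.cos (u*ξ) * Real.sin (u'*ξ) + u' * Real.sin (u*ξ) * Real.cos (u'*ξ)) * ξ ^ q
      - Real.sin (u*ξ) * Real.sin (u'*ξ) * (q * ξ ^ (q-1))) / (ξ ^ q) ^ 2 with hF'
  have hmem_pos : ∀ ξ ∈ Set.uIcc ωi ωip1, 0 < ξ := by
    intro ξ hξ
    rw [Set.uIcc_of_le hlt.le] at hξ
    linarith [hξ.1]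
  -- derivative of V
  have hVd : ∀ ξ ∈ Set.uIcc ωi ωip1,
      HasDerivAt (fun ξ => Real.sin (b*ξ) / b) (Real.cos (b*ξ)) ξ := by
    intro ξ _
    have h1 : HasDerivAt (fun ξ : ℝ => b * ξ) b ξ := by
      simpa using (hasDerivAt_id ξ).const_mul b
    have h2 := ((Real.hasDerivAt_sin (b*ξ)).comp ξ h1).div_const b
    exact h2.congr_deriv (by rw [mul_div_cancel_right₀ _ hb.ne'])
  -- derivative of F
  have hFd : ∀ ξ ∈ Set.uIcc ωi ωip1, HasDerivAt F (F' ξ) ξ := by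
    intro ξ hξ
    have hξ0 := hmem_pos ξ hξ
    have hs1 : HasDerivAt (fun ξ => Real.sin (u*ξ)) (u * Real.cos (u*ξ)) ξ := by
      have h1 : HasDerivAt (fun ξ : ℝ => u * ξ) u ξ := by
        simpa using (hasDerivAt_id ξ).const_mul u
      exact ((Real.hasDerivAt_sin (u*ξ)).comp ξ h1).congr_deriv (mul_comm _ _)
    have hs2 : HasDerivAt (fun ξ => Real.sin (u'*ξ)) (u' * Real.cos (u'*ξ)) ξ := by
      have h1 : HasDerivAt (fun ξ : ℝ => u' * ξ) u' ξ := by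
        simpa using (hasDerivAt_id ξ).const_mul u'
      exact ((Real.hasDerivAt_sin (u'*ξ)).comp ξ h1).congr_deriv (mul_comm _ _)
    have hnum : HasDerivAt (fun ξ => Real.sin (u*ξ) * Real.sin (u'*ξ))
        (u * Real.cos (u*ξ) * Real.sin (u'*ξ) + u' * Real.sin (u*ξ) * Real.cos (u'*ξ)) ξ := by
      exact (hs1.mul hs2).congr_deriv (by ring)
    have hden : HasDerivAt (fun ξ : ℝ => ξ ^ q) (q * ξ ^ (q-1)) ξ :=
      Real.hasDerivAt_rpow_const (Or.inl hξ0.ne')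
    exact hnum.div hden (Real.rpow_pos_of_pos hξ0 q).ne'
  -- integrability
  have hF'int : IntervalIntegrable F' volume ωi ωip1 := by
    apply ContinuousOn.intervalIntegrable
    rw [hF']
    apply ContinuousOn.div
    · apply ContinuousOn.sub
      · exact ((by fun_prop : Continuous fun ξ : ℝ =>
            u * Real.cos (u*ξ) * Real.sin (u'*ξ)
              + u' * Real.sin (u*ξ) * Real.cos (u'*ξ)).continuousOn).mul
          ((Real.continuous_rpow_const hq0.le).continuousOn)
      · exact ((by fun_prop : Continuous fun ξ : ℝ =>
            Real.sin (u*ξ) * Real.sin (u'*ξ)).continuousOn).mul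
          ((continuous_const.mul (Real.continuous_rpow_const hq1)).continuousOn)
    · exact ((Real.continuous_rpow_const hq0.le).pow 2).continuousOn
    · intro ξ hξ
      exact pow_ne_zero 2 (Real.rpow_pos_of_pos (hmem_pos ξ hξ) q).ne'
  have hVint : IntervalIntegrable (fun ξ => Real.cos (b*ξ)) volume ωi ωip1 :=
    (by fun_prop : Continuous fun ξ : ℝ => Real.cos (b*ξ)).intervalIntegrable ωi ωip1
  -- rewrite integrand and integrate by parts
  have hrw : (∫ ξ in ωi..ωip1, Real.sin (u * ξ) * Real.sin (u' * ξ) * Real.cos (b * ξ) / ξ ^ q)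
      = ∫ ξ in ωi..ωip1, F ξ * Real.cos (b*ξ) :=
    intervalIntegral.integral_congr fun ξ _ => by simp only [hF]; ring
  have hIBP := intervalIntegral.integral_mul_deriv_eq_deriv_mul hFd hVd hF'int hVint
  -- pointwise bounds
  have hsinb : ∀ c x : ℝ, 0 < c → ωi ≤ x → x ≤ ωip1 → |Real.sin (c*x)| ≤ c * ωip1 := by
    intro c x hc h1 h2
    calc |Real.sin (c*x)| ≤ |c*x| := Real.abs_sin_le_abs
      _ = c * x := abs_of_nonneg (by nlinarith)
      _ ≤ c * ωip1 := by nlinarith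
  have hFb : ∀ ξ, ωi ≤ ξ → ξ ≤ ωip1 → |F ξ| ≤ u * u' * K1 := by
    intro ξ h1 h2
    have hξ0 : 0 < ξ := lt_of_lt_of_le h0 h1
    have hnum : |Real.sin (u*ξ) * Real.sin (u'*ξ)| ≤ (u*ωip1) * (u'*ωip1) := by
      rw [abs_mul]
      exact mul_le_mul (hsinb u ξ hu h1 h2) (hsinb u' ξ hu' h1 h2) (abs_nonneg _) (by positivity)
    have hden : ωi ^ q ≤ ξ ^ q := Real.rpow_le_rpow h0.le h1 hq0.le
    calc |F ξ| = |Real.sin (u*ξ) * Real.sin (u'*ξ)| / ξ ^ q := by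
          rw [hF]; simp only [abs_div, abs_of_pos (Real.rpow_pos_of_pos hξ0 q)]
      _ ≤ ((u*ωip1) * (u'*ωip1)) / ωi ^ q :=
          div_le_div₀ (by positivity) hnum (Real.rpow_pos_of_pos h0 q) hden
      _ = u * u' * K1 := by rw [hK1]; ring
  have hF'b : ∀ ξ, ωi ≤ ξ → ξ ≤ ωip1 → |F' ξ| ≤ u * u' * K2 := by
    intro ξ h1 h2
    have hξ0 : 0 < ξ := lt_of_lt_of_le h0 h1
    have hA : |u * Real.cos (u*ξ) * Real.sin (u'*ξ) + u' * Real.sin (u*ξ) * Real.cos (u'*ξ)|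
        ≤ 2 * (u * u' * ωip1) := by
      have h1' : |u * Real.cos (u*ξ) * Real.sin (u'*ξ)| ≤ u * 1 * (u' * ωip1) := by
        rw [abs_mul, abs_mul, abs_of_pos hu]
        exact mul_le_mul (mul_le_mul le_rfl (Real.abs_cos_le_one _) (abs_nonneg _) hu.le)
          (hsinb u' ξ hu' h1 h2) (abs_nonneg _) (by positivity)
      have h2' : |u' * Real.sin (u*ξ) * Real.cos (u'*ξ)| ≤ u' * (u * ωip1) * 1 := by
        rw [abs_mul, abs_mul, abs_of_pos hu']
        exact mul_le_mul (mul_le_mul le_rfl (hsinb u ξ hu h1 h2) (abs_nonneg _) hu'.le)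
          (Real.abs_cos_le_one _) (abs_nonneg _) (by positivity)
      calc |_ + _| ≤ _ + _ := abs_add_le _ _
        _ ≤ u * 1 * (u' * ωip1) + u' * (u * ωip1) * 1 := add_le_add h1' h2'
        _ = 2 * (u * u' * ωip1) := by ring
    have hS : |Real.sin (u*ξ) * Real.sin (u'*ξ)| ≤ (u*ωip1) * (u'*ωip1) := by
      rw [abs_mul]
      exact mul_le_mul (hsinb u ξ hu h1 h2) (hsinb u' ξ hu' h1 h2) (abs_nonneg _) (by positivity)
    have hr1 : ξ ^ q ≤ ωip1 ^ q := Real.rpow_le_rpow hξ0.le h2 hq0.le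
    have hr2 : ξ ^ (q-1) ≤ ωip1 ^ (q-1) := Real.rpow_le_rpow hξ0.le h2 hq1
    have hrp1 : (0:ℝ) < ξ ^ q := Real.rpow_pos_of_pos hξ0 q
    have hrp2 : (0:ℝ) < ξ ^ (q-1) := Real.rpow_pos_of_pos hξ0 (q-1)
    have hN : |( u * Real.cos (u*ξ) * Real.sin (u'*ξ) + u' * Real.sin (u*ξ) * Real.cos (u'*ξ)) * ξ ^ q
          - Real.sin (u*ξ) * Real.sin (u'*ξ) * (q * ξ ^ (q-1))|
        ≤ 2 * (u * u' * ωip1) * ωip1 ^ q + ((u*ωip1) * (u'*ωip1)) * (q * ωip1 ^ (q-1)) := by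
      have t1 : |(u * Real.cos (u*ξ) * Real.sin (u'*ξ) + u' * Real.sin (u*ξ) * Real.cos (u'*ξ)) * ξ ^ q|
          ≤ 2 * (u * u' * ωip1) * ωip1 ^ q := by
        rw [abs_mul, abs_of_pos hrp1]
        exact mul_le_mul hA hr1 hrp1.le (by positivity)
      have t2 : |Real.sin (u*ξ) * Real.sin (u'*ξ) * (q * ξ ^ (q-1))|
          ≤ ((u*ωip1) * (u'*ωip1)) * (q * ωip1 ^ (q-1)) := by
        rw [abs_mul, abs_of_pos (by positivity : (0:ℝ) < q * ξ ^ (q-1))]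
        exact mul_le_mul hS (by nlinarith) (by positivity) (by positivity)
      exact (abs_sub _ _).trans (add_le_add t1 t2)
    have hdd : (ωi ^ q) ^ 2 ≤ (ξ ^ q) ^ 2 :=
      pow_le_pow_left₀ (Real.rpow_pos_of_pos h0 q).le (Real.rpow_le_rpow h0.le h1 hq0.le) 2
    calc |F' ξ| = |(u * Real.cos (u*ξ) * Real.sin (u'*ξ) + u' * Real.sin (u*ξ) * Real.cos (u'*ξ)) * ξ ^ q
          - Real.sin (u*ξ) * Real.sin (u'*ξ) * (q * ξ ^ (q-1))| / (ξ ^ q) ^ 2 := by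
          rw [hF']; simp only [abs_div, abs_of_pos (by positivity : (0:ℝ) < (ξ ^ q) ^ 2)]
      _ ≤ (2 * (u * u' * ωip1) * ωip1 ^ q + ((u*ωip1) * (u'*ωip1)) * (q * ωip1 ^ (q-1)))
            / (ωi ^ q) ^ 2 :=
          div_le_div₀ (by positivity) hN (by positivity) hdd
      _ = u * u' * K2 := by rw [hK2, hq]; ring
  -- assemble
  have hs1 : |Real.sin (b*ωip1)| ≤ 1 := Real.abs_sin_le_one _
  have hs2 : |Real.sin (b*ωi)| ≤ 1 := Real.abs_sin_le_one _
  have key : ∀ M x y : ℝ, 0 ≤ M → |x| ≤ M → |y| ≤ 1 → |x * (y / b)| ≤ M / b := by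
    intro M x y hM hx hy
    have : |x * (y / b)| = |x| * (|y| / b) := by
      rw [abs_mul, abs_div, abs_of_pos hb]
    rw [this]
    calc |x| * (|y| / b) ≤ M * (1 / b) :=
          mul_le_mul hx (div_le_div₀ (by norm_num) hy hb le_rfl) (by positivity) hM
      _ = M / b := by ring
  have hb1 : |F ωip1 * (Real.sin (b*ωip1) / b)| ≤ u * u' * K1 / b :=
    key _ _ _ (by positivity) (hFb ωip1 hlt.le le_rfl) hs1
  have hb2 : |F ωi * (Real.sin (b*ωi) / b)| ≤ u * u' * K1 / b :=
    key _ _ _ (by positivity) (hFb ωi le_rfl hlt.le) hs2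
  have hint : |∫ ξ in ωi..ωip1, F' ξ * (Real.sin (b*ξ) / b)|
      ≤ (u * u' * K2 / b) * |ωip1 - ωi| := by
    rw [← Real.norm_eq_abs]
    apply intervalIntegral.norm_integral_le_of_norm_le_const
    intro ξ hξ
    rw [Set.uIoc_of_le hlt.le] at hξ
    rw [Real.norm_eq_abs]
    exact key _ _ _ (by positivity) (hF'b ξ hξ.1.le hξ.2) (Real.abs_sin_le_one _)
  rw [hrw, hIBP]
  have habs : |ωip1 - ωi| = ωip1 - ωi := abs_of_pos (by linarith)
  rw [habs] at hint
  calc |F ωip1 * (Real.sin (b*ωip1) / b) - F ωi * (Real.sin (b*ωi) / b)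
        - ∫ ξ in ωi..ωip1, F' ξ * (Real.sin (b*ξ) / b)|
      ≤ |F ωip1 * (Real.sin (b*ωip1) / b) - F ωi * (Real.sin (b*ωi) / b)|
        + |∫ ξ in ωi..ωip1, F' ξ * (Real.sin (b*ξ) / b)| := abs_sub _ _
    _ ≤ (|F ωip1 * (Real.sin (b*ωip1) / b)| + |F ωi * (Real.sin (b*ωi) / b)|)
        + |∫ ξ in ωi..ωip1, F' ξ * (Real.sin (b*ξ) / b)| :=
        add_le_add_left (abs_sub _ _) _
    _ ≤ (u * u' * K1 / b + u * u' * K1 / b) + (u * u' * K2 / b) * (ωip1 - ωi) :=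
        add_le_add (add_le_add hb1 hb2) hint
    _ = (2 * K1 + (ωip1 - ωi) * K2) * (u * u') / b := by ring
end

section
/- Suppose the function x ↦ I(x) = 2(σ₁² x^{2H₁+1} ∫_α^{xω} |φ(u)|²/u^{2H₁+1} du + σ₂² x^{2H₂+1} ∫_{xω}^β |φ(u)|²/u^{2H₂+1} du) coincides with a₁ x^{b₁} on an interval [α/ω, α/ω + η'] with η' > 0, where φ is continuous, φ(α) = 0, φ not identically 0 on any subinterval of (α,β), ω > 0, σ₁, σ₂ > 0, H₁, H₂ ∈ (0,1). Then σ₁² = σ₂² and H₁ = H₂. -/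
open MeasureTheory Real Set

lemma aux_integral_pos (f : ℝ → ℝ) (a b y : ℝ) (hy : y ∈ Set.Ioo a b)
    (hc : ∀ u ∈ Set.Icc a b, ContinuousAt f u)
    (hnn : ∀ u ∈ Set.Icc a b, 0 ≤ f u) (hfy : 0 < f y) :
    0 < ∫ u in a..b, f u := by
  obtain ⟨hay, hyb⟩ := hy
  have hyI : y ∈ Set.Icc a b := ⟨hay.le, hyb.le⟩
  have hev : ∀ᶠ u in nhds y, 0 < f u := (hc y hyI).eventually (eventually_gt_nhds hfy)
  obtain ⟨ε, hε, hball⟩ := Metric.eventually_nhds_iff.mp hev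
  set c := max a (y - ε/2) with hcdef
  set d := min b (y + ε/2) with hddef
  have hcy : c < y := max_lt hay (by linarith)
  have hyd : y < d := lt_min hyb (by linarith)
  have hac : a ≤ c := le_max_left _ _
  have hdb : d ≤ b := min_le_left _ _
  have hcb : c ≤ b := (hcy.trans hyb).le
  have had : a ≤ d := (hay.trans hyd).le
  have hposcd : ∀ u ∈ Set.Ioo c d, 0 < f u := by
    intro u hu
    apply hball
    have h1 : y - ε/2 ≤ c := le_max_right _ _
    have h2 : d ≤ y + ε/2 := min_le_right _ _
    rw [Real.dist_eq, abs_lt]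
    constructor
    · linarith [hu.1]
    · linarith [hu.2]
  have hint : ∀ s t : ℝ, a ≤ s → s ≤ t → t ≤ b → IntervalIntegrable f volume s t := by
    intro s t hs hst ht
    apply ContinuousOn.intervalIntegrable
    intro u hu
    rw [Set.uIcc_of_le hst] at hu
    exact (hc u ⟨hs.trans hu.1, hu.2.trans ht⟩).continuousWithinAt
  have h1 : (0:ℝ) ≤ ∫ u in a..c, f u :=
    intervalIntegral.integral_nonneg hac (fun u hu => hnn u ⟨hu.1, hu.2.trans hcb⟩)
  have h2 : (0:ℝ) < ∫ u in c..d, f u :=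
    intervalIntegral.intervalIntegral_pos_of_pos_on (hint c d hac (hcy.trans hyd).le hdb)
      hposcd (hcy.trans hyd)
  have h3 : (0:ℝ) ≤ ∫ u in d..b, f u :=
    intervalIntegral.integral_nonneg hdb (fun u hu => hnn u ⟨had.trans hu.1, hu.2⟩)
  have e1 := intervalIntegral.integral_add_adjacent_intervals
    (hint a c le_rfl hac hcb) (hint c d hac (hcy.trans hyd).le hdb)
  have e2 := intervalIntegral.integral_add_adjacent_intervals
    (hint a d le_rfl had hdb) (hint d b had hdb le_rfl)
  linarith [e1, e2]

set_option maxHeartbeats 2000000 in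
theorem power_law_identifiability
    (α β ω η' σ₁ σ₂ H₁ H₂ a₁ b₁ : ℝ)
    (hα : 0 < α) (hαβ : α < β) (hω : 0 < ω) (hη : 0 < η')
    (hσ₁ : 0 < σ₁) (hσ₂ : 0 < σ₂)
    (hH₁ : H₁ ∈ Set.Ioo (0:ℝ) 1) (hH₂ : H₂ ∈ Set.Ioo (0:ℝ) 1)
    (hsub : (α / ω + η') * ω ≤ β)
    (φ : ℝ → ℝ) (hφcont : Continuous φ) (hφα : φ α = 0)
    (hφne : ∀ s t : ℝ, α ≤ s → s < t → t ≤ β → ∃ x ∈ Set.Ioo s t, φ x ≠ 0)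
    (hI : ∀ x ∈ Set.Icc (α / ω) (α / ω + η'),
      2 * (σ₁ ^ 2 * x ^ (2 * H₁ + 1)
              * (∫ u in α..(x * ω), (φ u) ^ 2 / u ^ (2 * H₁ + 1))
            + σ₂ ^ 2 * x ^ (2 * H₂ + 1)
              * (∫ u in (x * ω)..β, (φ u) ^ 2 / u ^ (2 * H₂ + 1)))
        = a₁ * x ^ b₁) :
    σ₁ ^ 2 = σ₂ ^ 2 ∧ H₁ = H₂ := by
  set x₀ := α / ω with hx₀def
  set p := 2 * H₁ + 1 with hpdef
  set q := 2 * H₂ + 1 with hqdef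
  have hx₀ : 0 < x₀ := div_pos hα hω
  have hx₀ω : x₀ * ω = α := div_mul_cancel₀ α hω.ne'
  have hp1 : 1 < p := by rw [hpdef]; nlinarith [hH₁.1]
  have hq1 : 1 < q := by rw [hqdef]; nlinarith [hH₂.1]
  have hβ : 0 < β := hα.trans hαβ
  -- continuity/nonnegativity/integrability of integrands
  have hgc : ∀ (c : ℝ) (u : ℝ), 0 < u → ContinuousAt (fun v => φ v ^ 2 / v ^ c) u := by
    intro c u hu
    exact ((hφcont.continuousAt).pow 2).div
      (Real.continuousAt_rpow_const u c (Or.inl hu.ne'))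
      (Real.rpow_pos_of_pos hu c).ne'
  have hgnn : ∀ (c : ℝ) (u : ℝ), 0 ≤ u → 0 ≤ φ u ^ 2 / u ^ c := by
    intro c u hu
    exact div_nonneg (sq_nonneg _) (Real.rpow_nonneg hu c)
  have hint : ∀ (c : ℝ) (s t : ℝ), 0 < s → 0 < t →
      IntervalIntegrable (fun v => φ v ^ 2 / v ^ c) volume s t := by
    intro c s t hs ht
    apply ContinuousOn.intervalIntegrable
    intro u hu
    have hu0 : 0 < u := lt_of_lt_of_le (lt_min hs ht) hu.1
    exact (hgc c u hu0).continuousWithinAt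
  have hmeas : ∀ (c : ℝ) (u : ℝ), 0 < u →
      StronglyMeasurableAtFilter (fun v => φ v ^ 2 / v ^ c) (nhds u) volume := by
    intro c u hu
    exact ContinuousAt.stronglyMeasurableAtFilter isOpen_Ioi
      (fun v hv => hgc c v hv) u hu
  -- FTC derivatives
  have hA : ∀ (c : ℝ) (x : ℝ), 0 < x →
      HasDerivAt (fun z => ∫ u in α..(z * ω), φ u ^ 2 / u ^ c)
        ((φ (x * ω) ^ 2 / (x * ω) ^ c) * ω) x := by
    intro c x hx
    have hxω : 0 < x * ω := mul_pos hx hω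
    have hF : HasDerivAt (fun y => ∫ u in α..y, φ u ^ 2 / u ^ c)
        (φ (x * ω) ^ 2 / (x * ω) ^ c) (x * ω) :=
      intervalIntegral.integral_hasDerivAt_right (hint c α (x * ω) hα hxω)
        (hmeas c (x * ω) hxω) (hgc c (x * ω) hxω)
    exact HasDerivAt.comp x hF (hasDerivAt_mul_const ω)
  have hB : ∀ (c : ℝ) (x : ℝ), 0 < x →
      HasDerivAt (fun z => ∫ u in (z * ω)..β, φ u ^ 2 / u ^ c)
        (-(φ (x * ω) ^ 2 / (x * ω) ^ c) * ω) x := by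
    intro c x hx
    have hxω : 0 < x * ω := mul_pos hx hω
    have hF : HasDerivAt (fun y => ∫ u in y..β, φ u ^ 2 / u ^ c)
        (-(φ (x * ω) ^ 2 / (x * ω) ^ c)) (x * ω) :=
      intervalIntegral.integral_hasDerivAt_left (hint c (x * ω) β hxω hβ)
        (hmeas c (x * ω) hxω) (hgc c (x * ω) hxω)
    exact HasDerivAt.comp x hF (hasDerivAt_mul_const ω)
  -- full derivative of the LHS
  have hLd : ∀ x : ℝ, 0 < x → HasDerivAt
      (fun z => 2 * (σ₁ ^ 2 * z ^ p * (∫ u in α..(z * ω), (φ u) ^ 2 / u ^ p)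
            + σ₂ ^ 2 * z ^ q * (∫ u in (z * ω)..β, (φ u) ^ 2 / u ^ q)))
      (2 * ((σ₁ ^ 2 * (p * x ^ (p-1))) * (∫ u in α..(x * ω), (φ u) ^ 2 / u ^ p)
              + (σ₁ ^ 2 * x ^ p) * ((φ (x * ω) ^ 2 / (x * ω) ^ p) * ω)
            + ((σ₂ ^ 2 * (q * x ^ (q-1))) * (∫ u in (x * ω)..β, (φ u) ^ 2 / u ^ q)
              + (σ₂ ^ 2 * x ^ q) * (-(φ (x * ω) ^ 2 / (x * ω) ^ q) * ω)))) x := by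
    intro x hx
    have hd1 : HasDerivAt (fun z : ℝ => z ^ p) (p * x ^ (p-1)) x :=
      Real.hasDerivAt_rpow_const (Or.inl hx.ne')
    have hd2 : HasDerivAt (fun z : ℝ => z ^ q) (q * x ^ (q-1)) x :=
      Real.hasDerivAt_rpow_const (Or.inl hx.ne')
    exact (((hd1.const_mul (σ₁ ^ 2)).mul (hA p x hx)).add
      ((hd2.const_mul (σ₂ ^ 2)).mul (hB q x hx))).const_mul 2
  have hRd : ∀ x : ℝ, 0 < x →
      HasDerivAt (fun z => a₁ * z ^ b₁) (a₁ * (b₁ * x ^ (b₁ - 1))) x := by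
    intro x hx
    exact (Real.hasDerivAt_rpow_const (Or.inl hx.ne')).const_mul a₁
  -- matching value and derivative at x₀
  have hx₀mem : x₀ ∈ Set.Icc x₀ (x₀ + η') := left_mem_Icc.mpr (by linarith)
  have hUD : UniqueDiffWithinAt ℝ (Set.Icc x₀ (x₀ + η')) x₀ :=
    (uniqueDiffOn_Icc (by linarith : x₀ < x₀ + η')) x₀ hx₀mem
  have hmatch :
      2 * ((σ₁ ^ 2 * (p * x₀ ^ (p-1))) * (∫ u in α..(x₀ * ω), (φ u) ^ 2 / u ^ p)
              + (σ₁ ^ 2 * x₀ ^ p) * ((φ (x₀ * ω) ^ 2 / (x₀ * ω) ^ p) * ω)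
            + ((σ₂ ^ 2 * (q * x₀ ^ (q-1))) * (∫ u in (x₀ * ω)..β, (φ u) ^ 2 / u ^ q)
              + (σ₂ ^ 2 * x₀ ^ q) * (-(φ (x₀ * ω) ^ 2 / (x₀ * ω) ^ q) * ω)))
        = a₁ * (b₁ * x₀ ^ (b₁ - 1)) := by
    have h1 := ((hLd x₀ hx₀).hasDerivWithinAt.congr
      (fun y hy => (hI y hy).symm) (hI x₀ hx₀mem).symm).derivWithin hUD
    have h2 := ((hRd x₀ hx₀).hasDerivWithinAt (s := Set.Icc x₀ (x₀ + η'))).derivWithin hUD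
    exact h1.symm.trans h2
  rw [hx₀ω, hφα] at hmatch
  simp only [intervalIntegral.integral_same, ne_eq, OfNat.ofNat_ne_zero,
    not_false_eq_true, zero_pow, zero_div, mul_zero, zero_mul, neg_zero, add_zero,
    mul_zero, zero_add] at hmatch
  -- hmatch : 2 * (σ₂ ^ 2 * (q * x₀ ^ (q - 1)) * ∫ u in α..β, φ u ^ 2 / u ^ q)
  --            = a₁ * (b₁ * x₀ ^ (b₁ - 1))
  have hEv := hI x₀ hx₀mem
  rw [hx₀ω] at hEv
  simp only [intervalIntegral.integral_same, mul_zero, zero_add] at hEv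
  -- hEv : 2 * (σ₂ ^ 2 * x₀ ^ q * ∫ u in α..β, φ u ^ 2 / u ^ q) = a₁ * x₀ ^ b₁
  -- positivity of C = ∫ α..β
  have hCpos : 0 < ∫ u in α..β, φ u ^ 2 / u ^ q := by
    obtain ⟨y, hy, hyne⟩ := hφne α β le_rfl hαβ le_rfl
    exact aux_integral_pos _ α β y hy
      (fun u hu => hgc q u (hα.trans_le hu.1))
      (fun u hu => hgnn q u (hα.trans_le hu.1).le)
      (div_pos (pow_pos (abs_pos.mpr hyne) 2 |>.trans_eq (by rw [sq_abs]))
        (Real.rpow_pos_of_pos (hα.trans hy.1) q))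
  set C := ∫ u in α..β, φ u ^ 2 / u ^ q with hCdef
  have hx₀q : (0:ℝ) < x₀ ^ q := Real.rpow_pos_of_pos hx₀ q
  have hVpos : 0 < 2 * (σ₂ ^ 2 * x₀ ^ q * C) := by positivity
  -- b₁ = q
  have hb₁ : b₁ = q := by
    have e1 : x₀ ^ (q - 1) = x₀ ^ q / x₀ := by rw [Real.rpow_sub hx₀, Real.rpow_one]
    have e2 : x₀ ^ (b₁ - 1) = x₀ ^ b₁ / x₀ := by rw [Real.rpow_sub hx₀, Real.rpow_one]
    rw [e1, e2] at hmatch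
    have hne : x₀ ≠ 0 := hx₀.ne'
    have h3 : q * (2 * (σ₂ ^ 2 * x₀ ^ q * C)) = b₁ * (a₁ * x₀ ^ b₁) := by
      field_simp at hmatch
      linarith [hmatch]
    rw [← hEv] at h3
    have := mul_right_cancel₀ hVpos.ne' (by linarith [h3] : q * (2 * (σ₂ ^ 2 * x₀ ^ q * C)) = b₁ * (2 * (σ₂ ^ 2 * x₀ ^ q * C)))
    exact this.symm
  -- a₁ = 2 σ₂² C
  have ha₁ : a₁ = 2 * σ₂ ^ 2 * C := by
    rw [hb₁] at hEv
    have : (2 * σ₂ ^ 2 * C) * x₀ ^ q = a₁ * x₀ ^ q := by linarith [hEv]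
    exact (mul_right_cancel₀ hx₀q.ne' this).symm
  -- key identity on the interval
  have hKey : ∀ x ∈ Set.Icc x₀ (x₀ + η'),
      σ₁ ^ 2 * x ^ p * (∫ u in α..(x * ω), (φ u) ^ 2 / u ^ p)
        = σ₂ ^ 2 * x ^ q * (∫ u in α..(x * ω), (φ u) ^ 2 / u ^ q) := by
    intro x hx
    have hxpos : 0 < x := hx₀.trans_le hx.1
    have hxω : 0 < x * ω := mul_pos hxpos hω
    have hadd := intervalIntegral.integral_add_adjacent_intervals
      (hint q α (x * ω) hα hxω) (hint q (x * ω) β hxω hβ)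
    have hIx := hI x hx
    rw [hb₁, ha₁] at hIx
    have hB' : (∫ u in (x * ω)..β, (φ u) ^ 2 / u ^ q)
        = C - (∫ u in α..(x * ω), (φ u) ^ 2 / u ^ q) := by
      rw [hCdef, ← hadd]; ring
    rw [hB'] at hIx
    nlinarith [hIx]
  -- differentiated identity in the interior
  have hE2 : ∀ x ∈ Set.Ioo x₀ (x₀ + η'),
      (p - q) * (σ₂ ^ 2 * x ^ q * (∫ u in α..(x * ω), (φ u) ^ 2 / u ^ q))
        = (ω * (σ₂ ^ 2 / ω ^ q - σ₁ ^ 2 / ω ^ p) * φ (x * ω) ^ 2) * x := by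
    intro x hx
    have hxpos : 0 < x := hx₀.trans hx.1
    have hd1 : HasDerivAt (fun z : ℝ => z ^ p) (p * x ^ (p-1)) x :=
      Real.hasDerivAt_rpow_const (Or.inl hxpos.ne')
    have hd2 : HasDerivAt (fun z : ℝ => z ^ q) (q * x ^ (q-1)) x :=
      Real.hasDerivAt_rpow_const (Or.inl hxpos.ne')
    have hL1 : HasDerivAt (fun z => σ₁ ^ 2 * z ^ p * (∫ u in α..(z * ω), (φ u) ^ 2 / u ^ p))
        ((σ₁ ^ 2 * (p * x ^ (p-1))) * (∫ u in α..(x * ω), (φ u) ^ 2 / u ^ p)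
          + (σ₁ ^ 2 * x ^ p) * ((φ (x * ω) ^ 2 / (x * ω) ^ p) * ω)) x :=
      (hd1.const_mul (σ₁ ^ 2)).mul (hA p x hxpos)
    have hR1 : HasDerivAt (fun z => σ₂ ^ 2 * z ^ q * (∫ u in α..(z * ω), (φ u) ^ 2 / u ^ q))
        ((σ₂ ^ 2 * (q * x ^ (q-1))) * (∫ u in α..(x * ω), (φ u) ^ 2 / u ^ q)
          + (σ₂ ^ 2 * x ^ q) * ((φ (x * ω) ^ 2 / (x * ω) ^ q) * ω)) x :=
      (hd2.const_mul (σ₂ ^ 2)).mul (hA q x hxpos)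
    have hmem : Set.Icc x₀ (x₀ + η') ∈ nhds x := Icc_mem_nhds hx.1 hx.2
    have heq : (fun z => σ₂ ^ 2 * z ^ q * (∫ u in α..(z * ω), (φ u) ^ 2 / u ^ q))
        =ᶠ[nhds x] (fun z => σ₁ ^ 2 * z ^ p * (∫ u in α..(z * ω), (φ u) ^ 2 / u ^ p)) := by
      filter_upwards [hmem] with z hz
      exact (hKey z hz).symm
    have hDeq := (hL1.congr_of_eventuallyEq heq).unique hR1
    -- now pure algebra
    have hkx := hKey x (Set.mem_Icc.mpr ⟨hx.1.le, hx.2.le⟩)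
    have e1 : x ^ (p - 1) = x ^ p / x := by rw [Real.rpow_sub hxpos, Real.rpow_one]
    have e2 : x ^ (q - 1) = x ^ q / x := by rw [Real.rpow_sub hxpos, Real.rpow_one]
    have e3 : (x * ω) ^ p = x ^ p * ω ^ p := Real.mul_rpow hxpos.le hω.le
    have e4 : (x * ω) ^ q = x ^ q * ω ^ q := Real.mul_rpow hxpos.le hω.le
    rw [e1, e2, e3, e4] at hDeq
    have hxp : (0:ℝ) < x ^ p := Real.rpow_pos_of_pos hxpos p
    have hxq : (0:ℝ) < x ^ q := Real.rpow_pos_of_pos hxpos q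
    have hωp : (0:ℝ) < ω ^ p := Real.rpow_pos_of_pos hω p
    have hωq : (0:ℝ) < ω ^ q := Real.rpow_pos_of_pos hω q
    have hxne : x ≠ 0 := hxpos.ne'
    have hPne : ω ^ p ≠ 0 := hωp.ne'
    have hQne : ω ^ q ≠ 0 := hωq.ne'
    have hXne : x ^ p ≠ 0 := hxp.ne'
    have hYne : x ^ q ≠ 0 := hxq.ne'
    field_simp at hDeq
    have hD' : σ₁^2*p*(∫ u in α..(x * ω), (φ u) ^ 2 / u ^ p)*x^p*ω^p*ω^q
          + σ₁^2*(φ (x*ω))^2*ω*x*ω^q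
        = σ₂^2*q*(∫ u in α..(x * ω), (φ u) ^ 2 / u ^ q)*x^q*ω^p*ω^q
          + σ₂^2*(φ (x*ω))^2*ω*x*ω^p := by
      apply mul_left_cancel₀ (show (x*(x^p*x^q)) ≠ 0 by positivity)
      linear_combination (x*(x^p*x^q)) * hDeq
    rw [div_sub_div _ _ hQne hPne]
    rw [show ω * ((σ₂ ^ 2 * ω^p - ω^q * σ₁ ^ 2) / (ω^q * ω^p)) * (φ (x*ω))^2 * x
        = (ω * (σ₂ ^ 2 * ω^p - ω^q * σ₁ ^ 2) * (φ (x*ω))^2 * x) / (ω^q * ω^p) by ring]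
    rw [eq_div_iff (by positivity : ω^q * ω^p ≠ 0)]
    linear_combination hD' - (p*ω^p*ω^q) * hkx
  -- positivity of the integral A₂ for x > x₀
  have hA2pos : ∀ x : ℝ, x₀ < x → x ≤ x₀ + η' →
      0 < ∫ u in α..(x * ω), (φ u) ^ 2 / u ^ q := by
    intro x hx1 hx2
    have hxω : α < x * ω := by
      rw [← hx₀ω]; exact mul_lt_mul_of_pos_right hx1 hω
    have hxωβ : x * ω ≤ β := le_trans (by nlinarith : x * ω ≤ (x₀ + η') * ω) hsub
    obtain ⟨y, hy, hyne⟩ := hφne α (x * ω) le_rfl hxω hxωβ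
    exact aux_integral_pos _ _ _ y hy
      (fun u hu => hgc q u (hα.trans_le hu.1))
      (fun u hu => hgnn q u (hα.trans_le hu.1).le)
      (div_pos (pow_pos (abs_pos.mpr hyne) 2 |>.trans_eq (by rw [sq_abs]))
        (Real.rpow_pos_of_pos (hα.trans hy.1) q))
  have hωq : (0:ℝ) < ω ^ q := Real.rpow_pos_of_pos hω q
  have hQne : ω ^ q ≠ 0 := hωq.ne'
  rcases eq_or_ne (σ₂ ^ 2 / ω ^ q - σ₁ ^ 2 / ω ^ p) 0 with hK | hK
  · -- the good case : K = 0
    have hx₁mem : x₀ + η' / 2 ∈ Set.Ioo x₀ (x₀ + η') := ⟨by linarith, by linarith⟩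
    have hpq : p = q := by
      by_contra hne
      have h2 := hE2 _ hx₁mem
      rw [hK] at h2
      simp only [mul_zero, zero_mul] at h2
      have hpos := hA2pos (x₀ + η' / 2) (by linarith) (by linarith)
      have h3 : (0:ℝ) < σ₂ ^ 2 * (x₀ + η' / 2) ^ q
          * (∫ u in α..((x₀ + η' / 2) * ω), (φ u) ^ 2 / u ^ q) := by
        have := Real.rpow_pos_of_pos (show (0:ℝ) < x₀ + η'/2 by linarith) q
        positivity
      rcases mul_eq_zero.mp h2 with h | h
      · exact hne (by linarith [sub_eq_zero.mp h])
      · exact absurd h h3.ne'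
    have hHeq : H₁ = H₂ := by rw [hpdef, hqdef] at hpq; linarith
    refine ⟨?_, hHeq⟩
    rw [hpq] at hK
    have h4 := sub_eq_zero.mp hK
    have h5 : σ₂ ^ 2 = σ₁ ^ 2 := by
      field_simp at h4
      nlinarith [h4]
    exact h5.symm
  · -- impossible case : K ≠ 0
    exfalso
    set m := (p - q) * σ₂ ^ 2 / ((σ₂ ^ 2 / ω ^ q - σ₁ ^ 2 / ω ^ p) * ω ^ q) with hmdef
    have hmK : m * ((σ₂ ^ 2 / ω ^ q - σ₁ ^ 2 / ω ^ p) * ω ^ q) = (p - q) * σ₂ ^ 2 :=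
      div_mul_cancel₀ _ (mul_ne_zero hK hQne)
    -- the function W
    have hWcont : ContinuousOn
        (fun z => (∫ u in α..(z * ω), (φ u) ^ 2 / u ^ q) * z ^ (-m))
        (Set.Icc x₀ (x₀ + η')) := by
      intro z hz
      have hz0 : 0 < z := hx₀.trans_le hz.1
      exact (((hA q z hz0).continuousAt).mul
        (Real.continuousAt_rpow_const z (-m) (Or.inl hz0.ne'))).continuousWithinAt
    have hWder : ∀ z ∈ Set.Ico x₀ (x₀ + η'),
        HasDerivWithinAt (fun z => (∫ u in α..(z * ω), (φ u) ^ 2 / u ^ q) * z ^ (-m))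
          0 (Set.Ici z) z := by
      intro z hz
      have hz0 : 0 < z := hx₀.trans_le hz.1
      have hd := (hA q z hz0).mul (Real.hasDerivAt_rpow_const (p := -m) (Or.inl hz0.ne'))
      have hval : (φ (z * ω) ^ 2 / (z * ω) ^ q * ω) * z ^ (-m)
          + (∫ u in α..(z * ω), (φ u) ^ 2 / u ^ q) * (-m * z ^ (-m - 1)) = 0 := by
        rcases eq_or_lt_of_le hz.1 with h | h
        · rw [← h, hx₀ω, hφα]
          simp [intervalIntegral.integral_same]
        · have h2 := hE2 z ⟨h, hz.2⟩
          have e4 : (z * ω) ^ q = z ^ q * ω ^ q := Real.mul_rpow hz0.le hω.le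
          have e5 : z ^ (-m - 1) = z ^ (-m) / z := by
            rw [Real.rpow_sub hz0, Real.rpow_one]
          rw [e4, e5]
          have hzq : (0:ℝ) < z ^ q := Real.rpow_pos_of_pos hz0 q
          have hzqne : z ^ q ≠ 0 := hzq.ne'
          have hzmne : z ^ (-m) ≠ 0 := (Real.rpow_pos_of_pos hz0 (-m)).ne'
          have hzne : z ≠ 0 := hz0.ne'
          have hR1 : (φ (z * ω)) ^ 2 * ω * z
              = m * (z ^ q * ω ^ q) * (∫ u in α..(z * ω), (φ u) ^ 2 / u ^ q) := by
            apply mul_right_cancel₀ hK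
            linear_combination (-1 : ℝ) * h2
              - (z ^ q * (∫ u in α..(z * ω), (φ u) ^ 2 / u ^ q)) * hmK
          field_simp
          linear_combination (z ^ (-m)) * hR1
      exact (show HasDerivAt _ (0:ℝ) z by rwa [hval] at hd).hasDerivWithinAt
    have hconst := constant_of_has_deriv_right_zero hWcont hWder (x₀ + η')
      (right_mem_Icc.mpr (by linarith))
    rw [hx₀ω] at hconst
    simp only [intervalIntegral.integral_same, zero_mul] at hconst
    have hpos := hA2pos (x₀ + η') (by linarith) le_rfl
    have hzm : (0:ℝ) < (x₀ + η') ^ (-m) :=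
      Real.rpow_pos_of_pos (by linarith) (-m)
    nlinarith [hconst, hpos, hzm]
end
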